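/- Let R → S be a ring homomorphism of commutative rings and M an S-module. Suppose g : S ⊗[R] M → M ⊗[R] S is an S⊗S-module homomorphism satisfying the cocycle condition g₁₃ = g₁₂ ∘ g₂₃ on S ⊗ S ⊗ M, and such that the composite M → S ⊗[R] M → M ⊗[R] S → M (where the first map is m ↦ 1 ⊗ m and the last map is multiplication m ⊗ s ↦ s•m) is the identity. Then g is an isomorphism, with inverse τ ∘ g ∘ τ where τ swaps the two tensor factors. -/
import Mathlib


open TensorProduct

/-- The "multiply the `S`-tensorand into `M`" map `M ⊗[R] S → M`, `m ⊗ s ↦ s • m`. -/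
noncomputable def descentMu (R S M : Type) [CommRing R] [CommRing S] [Algebra R S]
    [AddCommGroup M] [Module R M] [Module S M] [IsScalarTower R S M] :
    M ⊗[R] S →ₗ[R] M :=
  TensorProduct.lift <| LinearMap.mk₂ R (fun m s => s • m)
    (fun m m' s => smul_add s m m')
    (fun r m s => smul_comm s r m |>.symm ▸ (smul_comm (s : S) (r : R) m))
    (fun m s s' => add_smul s s' m)
    (fun r m s => smul_assoc r s m)

/-- The action of `s` in the `S`-tensorand slot, as an `R`-linear endomap of `M`. -/
noncomputable def descentSmul (R S M : Type) [CommRing R] [CommRing S] [Algebra R S]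
    [AddCommGroup M] [Module R M] [Module S M] [IsScalarTower R S M] (s : S) :
    M →ₗ[R] M :=
  (LinearMap.lsmul S M s).restrictScalars R

section Aux

variable (R S M : Type) [CommRing R] [CommRing S] [Algebra R S]
    [AddCommGroup M] [Module R M] [Module S M] [IsScalarTower R S M]

@[simp] lemma descentMu_tmul (m : M) (s : S) : descentMu R S M (m ⊗ₜ[R] s) = s • m := by
  simp [descentMu]

@[simp] lemma descentSmul_apply (s : S) (m : M) : descentSmul R S M s m = s • m := rfl

/-- contraction `(m ⊗ s') ⊗ s'' ↦ s' ⊗ (s'' • m)`. -/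
noncomputable def auxF : (M ⊗[R] S) ⊗[R] S →ₗ[R] S ⊗[R] M :=
  (descentMu R S M).lTensor S ∘ₗ (TensorProduct.assoc R S M S).toLinearMap ∘ₗ
    ((TensorProduct.comm R M S).toLinearMap.rTensor S)

@[simp] lemma auxF_tmul (m : M) (s' s'' : S) :
    auxF R S M ((m ⊗ₜ[R] s') ⊗ₜ[R] s'') = s' ⊗ₜ[R] (s'' • m) := by
  simp [auxF]

/-- contraction `(m ⊗ s') ⊗ s'' ↦ (s'' • m) ⊗ s'`. -/
noncomputable def auxG : (M ⊗[R] S) ⊗[R] S →ₗ[R] M ⊗[R] S :=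
  (descentMu R S M).rTensor S ∘ₗ (TensorProduct.assoc R M S S).symm.toLinearMap ∘ₗ
    ((TensorProduct.comm R S S).toLinearMap.lTensor M) ∘ₗ
    (TensorProduct.assoc R M S S).toLinearMap

@[simp] lemma auxG_tmul (m : M) (s' s'' : S) :
    auxG R S M ((m ⊗ₜ[R] s') ⊗ₜ[R] s'') = (s'' • m) ⊗ₜ[R] s' := by
  simp [auxG]

end Aux

theorem descent_datum_is_iso
    (R S M : Type) [CommRing R] [CommRing S] [Algebra R S]
    [AddCommGroup M] [Module R M] [Module S M] [IsScalarTower R S M]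
    (g : S ⊗[R] M →ₗ[R] M ⊗[R] S)
    -- `g` is `S ⊗ S`-linear: first tensorand `S`-action
    (hg₁ : ∀ s : S,
      g ∘ₗ (LinearMap.mulLeft R s).rTensor M
        = (descentSmul R S M s).rTensor S ∘ₗ g)
    -- `g` is `S ⊗ S`-linear: second tensorand `S`-action
    (hg₂ : ∀ s : S,
      g ∘ₗ (descentSmul R S M s).lTensor S
        = (LinearMap.mulLeft R s).lTensor M ∘ₗ g)
    -- the cocycle condition `g₁₃ = g₁₂ ∘ g₂₃`
    (hcocycle :
      ((TensorProduct.assoc R M S S).symm.toLinearMap ∘ₗ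
        ((TensorProduct.comm R S S).toLinearMap.lTensor M) ∘ₗ
        (TensorProduct.assoc R M S S).toLinearMap ∘ₗ
        g.rTensor S ∘ₗ
        (TensorProduct.assoc R S M S).symm.toLinearMap ∘ₗ
        ((TensorProduct.comm R S M).toLinearMap.lTensor S))
      = (g.rTensor S ∘ₗ (TensorProduct.assoc R S M S).symm.toLinearMap) ∘ₗ g.lTensor S)
    -- the composite `M → S ⊗ M → M ⊗ S → M` is the identity
    (hunit : ∀ m : M, descentMu R S M (g ((1 : S) ⊗ₜ[R] m)) = m) :
    Function.Bijective g ∧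
      ((TensorProduct.comm R M S).toLinearMap ∘ₗ g ∘ₗ
          (TensorProduct.comm R M S).toLinearMap) ∘ₗ g = LinearMap.id ∧
      g ∘ₗ ((TensorProduct.comm R M S).toLinearMap ∘ₗ g ∘ₗ
          (TensorProduct.comm R M S).toLinearMap) = LinearMap.id := by
  have τ := (TensorProduct.comm R M S).toLinearMap
  -- elementwise versions of the equivariance hypotheses
  have hg₁' : ∀ (s : S) (z : S ⊗[R] M),
      g ((LinearMap.mulLeft R s).rTensor M z) = (descentSmul R S M s).rTensor S (g z) :=
    fun s z => LinearMap.congr_fun (hg₁ s) z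
  have hg₂' : ∀ (s : S) (z : S ⊗[R] M),
      g ((descentSmul R S M s).lTensor S z) = (LinearMap.mulLeft R s).lTensor M (g z) :=
    fun s z => LinearMap.congr_fun (hg₂ s) z
  have hgsm : ∀ (s : S) (m : M),
      g (s ⊗ₜ[R] m) = (descentSmul R S M s).rTensor S (g ((1:S) ⊗ₜ[R] m)) := by
    intro s m
    have := hg₁' s ((1:S) ⊗ₜ[R] m)
    simpa using this
  -- commuting the flip with the slot actions
  have c1 : ∀ (s : S) (y : M ⊗[R] S),
      (TensorProduct.comm R M S) ((descentSmul R S M s).rTensor S y)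
        = (descentSmul R S M s).lTensor S ((TensorProduct.comm R M S) y) := by
    intro s y
    induction y using TensorProduct.induction_on with
    | zero => simp
    | tmul m t => simp
    | add a b ha hb => simp [map_add, ha, hb]
  have c2 : ∀ (s : S) (y : M ⊗[R] S),
      (TensorProduct.comm R M S) ((LinearMap.mulLeft R s).lTensor M y)
        = (LinearMap.mulLeft R s).rTensor M ((TensorProduct.comm R M S) y) := by
    intro s y
    induction y using TensorProduct.induction_on with
    | zero => simp
    | tmul m t => simp
    | add a b ha hb => simp [map_add, ha, hb]
  -- the cocycle condition, evaluated at `1 ⊗ 1 ⊗ m`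
  have hco : ∀ m : M,
      ((TensorProduct.assoc R M S S).symm
        (((TensorProduct.comm R S S).toLinearMap.lTensor M)
          ((TensorProduct.assoc R M S S) ((g ((1:S) ⊗ₜ[R] m)) ⊗ₜ[R] (1:S)))))
      = (g.rTensor S) ((TensorProduct.assoc R S M S).symm
          ((1:S) ⊗ₜ[R] (g ((1:S) ⊗ₜ[R] m)))) := by
    intro m
    have := LinearMap.congr_fun hcocycle ((1:S) ⊗ₜ[R] ((1:S) ⊗ₜ[R] m))
    simpa using this
  -- auxF applied to the left side of `hco`
  have hFL : ∀ x : M ⊗[R] S,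
      auxF R S M ((TensorProduct.assoc R M S S).symm
        (((TensorProduct.comm R S S).toLinearMap.lTensor M)
          ((TensorProduct.assoc R M S S) (x ⊗ₜ[R] (1:S)))))
      = (1:S) ⊗ₜ[R] (descentMu R S M x) := by
    intro x
    induction x using TensorProduct.induction_on with
    | zero => simp
    | tmul m s => simp
    | add a b ha hb => simp only [add_tmul, map_add, ha, hb, tmul_add]
  have hGL : ∀ x : M ⊗[R] S,
      auxG R S M ((TensorProduct.assoc R M S S).symm
        (((TensorProduct.comm R S S).toLinearMap.lTensor M)
          ((TensorProduct.assoc R M S S) (x ⊗ₜ[R] (1:S)))))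
      = (descentMu R S M x) ⊗ₜ[R] (1:S) := by
    intro x
    induction x using TensorProduct.induction_on with
    | zero => simp
    | tmul m s => simp
    | add a b ha hb => simp only [add_tmul, map_add, ha, hb]
  -- inner contraction lemmas
  have hFin : ∀ (s' : S) (y : M ⊗[R] S),
      auxF R S M (y ⊗ₜ[R] s')
        = (TensorProduct.comm R M S) ((descentSmul R S M s').rTensor S y) := by
    intro s' y
    induction y using TensorProduct.induction_on with
    | zero => simp
    | tmul m t => simp
    | add a b ha hb => simp only [add_tmul, map_add, ha, hb]
  have hGin : ∀ (s' : S) (y : M ⊗[R] S),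
      auxG R S M (y ⊗ₜ[R] s') = (descentSmul R S M s').rTensor S y := by
    intro s' y
    induction y using TensorProduct.induction_on with
    | zero => simp
    | tmul m t => simp
    | add a b ha hb => simp only [add_tmul, map_add, ha, hb]
  -- auxF/auxG applied to the right side of `hco`
  have hFR : ∀ x : M ⊗[R] S,
      auxF R S M ((g.rTensor S) ((TensorProduct.assoc R S M S).symm ((1:S) ⊗ₜ[R] x)))
      = (TensorProduct.comm R M S) (g ((TensorProduct.comm R M S) x)) := by
    intro x
    induction x using TensorProduct.induction_on with
    | zero => simp
    | tmul m s =>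
        have h1 : (TensorProduct.assoc R S M S).symm ((1:S) ⊗ₜ[R] (m ⊗ₜ[R] s))
            = ((1:S) ⊗ₜ[R] m) ⊗ₜ[R] s := by simp
        rw [h1]
        have h2 : (g.rTensor S) (((1:S) ⊗ₜ[R] m) ⊗ₜ[R] s)
            = (g ((1:S) ⊗ₜ[R] m)) ⊗ₜ[R] s := by simp
        rw [h2, hFin s (g ((1:S) ⊗ₜ[R] m))]
        rw [TensorProduct.comm_tmul, hgsm s m]
    | add a b ha hb => simp only [tmul_add, map_add, ha, hb]
  have hGR : ∀ x : M ⊗[R] S,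
      auxG R S M ((g.rTensor S) ((TensorProduct.assoc R S M S).symm ((1:S) ⊗ₜ[R] x)))
      = g ((TensorProduct.comm R M S) x) := by
    intro x
    induction x using TensorProduct.induction_on with
    | zero => simp
    | tmul m s =>
        have h1 : (TensorProduct.assoc R S M S).symm ((1:S) ⊗ₜ[R] (m ⊗ₜ[R] s))
            = ((1:S) ⊗ₜ[R] m) ⊗ₜ[R] s := by simp
        rw [h1]
        have h2 : (g.rTensor S) (((1:S) ⊗ₜ[R] m) ⊗ₜ[R] s)
            = (g ((1:S) ⊗ₜ[R] m)) ⊗ₜ[R] s := by simp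
        rw [h2, hGin s (g ((1:S) ⊗ₜ[R] m))]
        rw [TensorProduct.comm_tmul, hgsm s m]
    | add a b ha hb => simp only [tmul_add, map_add, ha, hb]
  -- the two key identities on `1 ⊗ m` resp. `m ⊗ 1`
  have main1 : ∀ m : M,
      (TensorProduct.comm R M S) (g ((TensorProduct.comm R M S) (g ((1:S) ⊗ₜ[R] m))))
        = (1:S) ⊗ₜ[R] m := by
    intro m
    have h := congrArg (auxF R S M) (hco m)
    rw [hFL (g ((1:S) ⊗ₜ[R] m)), hFR (g ((1:S) ⊗ₜ[R] m))] at h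
    rw [← h, hunit m]
  have main2 : ∀ m : M,
      g ((TensorProduct.comm R M S) (g ((1:S) ⊗ₜ[R] m))) = m ⊗ₜ[R] (1:S) := by
    intro m
    have h := congrArg (auxG R S M) (hco m)
    rw [hGL (g ((1:S) ⊗ₜ[R] m)), hGR (g ((1:S) ⊗ₜ[R] m))] at h
    rw [← h, hunit m]
  -- left inverse on simple tensors
  have left_inv : ∀ (s : S) (m : M),
      (TensorProduct.comm R M S) (g ((TensorProduct.comm R M S) (g (s ⊗ₜ[R] m))))
        = s ⊗ₜ[R] m := by
    intro s m
    rw [hgsm s m, c1, hg₂', c2, main1 m]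
    simp
  -- right inverse on simple tensors
  have right_inv : ∀ (m : M) (s : S),
      g ((TensorProduct.comm R M S) (g ((TensorProduct.comm R M S) (m ⊗ₜ[R] s))))
        = m ⊗ₜ[R] s := by
    intro m s
    rw [TensorProduct.comm_tmul, hgsm s m, c1, hg₂', main2 m]
    simp [mul_comm]
  have hleft :
      ((TensorProduct.comm R M S).toLinearMap ∘ₗ g ∘ₗ
          (TensorProduct.comm R M S).toLinearMap) ∘ₗ g = LinearMap.id := by
    apply TensorProduct.ext'
    intro s m
    simpa using left_inv s m
  have hright :
      g ∘ₗ ((TensorProduct.comm R M S).toLinearMap ∘ₗ g ∘ₗ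
          (TensorProduct.comm R M S).toLinearMap) = LinearMap.id := by
    apply TensorProduct.ext'
    intro m s
    simpa using right_inv m s
  have hli : ∀ a : S ⊗[R] M,
      (TensorProduct.comm R M S) (g ((TensorProduct.comm R M S) (g a))) = a := by
    intro a; simpa using LinearMap.congr_fun hleft a
  refine ⟨⟨fun a b hab => by rw [← hli a, hab, hli b], fun y =>
    ⟨(TensorProduct.comm R M S) (g ((TensorProduct.comm R M S) y)), by
      simpa using LinearMap.congr_fun hright y⟩⟩, hleft, hright⟩
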